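/- Let y ∈ ℝ, d a nonzero integer, and a ∈ ℤ, b ∈ ℕ with |by - a| < 1/|d|, 1 ≤ b ≤ |d|, gcd(a,b) = 1. Let e be a nonzero integer with |e| < |d| and gcd(d,e) ≥ 3. Then for all integers p, s with gcd(d, bp + a) = 1, we have |(p+y)/d - (s+y)/e| > 1/(b|de|). -/

import Mathlib

theorem stmt6 (y : ℝ) (d : ℤ) (hd : d ≠ 0) (a : ℤ) (b : ℕ) (hb : 1 ≤ b)
    (h1 : |(b : ℝ) * y - (a : ℝ)| < 1 / |(d : ℝ)|) (h2 : (b : ℤ) ≤ |d|)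
    (h3 : Int.gcd a b = 1)
    (e : ℤ) (he : e ≠ 0) (hed : |e| < |d|) (hgcd : 3 ≤ Int.gcd d e)
    (p s : ℤ) (hp : Int.gcd d ((b : ℤ) * p + a) = 1) :
    1 / ((b : ℝ) * |(d : ℝ) * (e : ℝ)|) <
      |((p : ℝ) + y) / (d : ℝ) - ((s : ℝ) + y) / (e : ℝ)| := by
  have hd0 : (d : ℝ) ≠ 0 := Int.cast_ne_zero.mpr hd
  have he0 : (e : ℝ) ≠ 0 := Int.cast_ne_zero.mpr he
  have hb0 : (0 : ℝ) < (b : ℝ) := by exact_mod_cast hb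
  set ε : ℝ := (b : ℝ) * y - (a : ℝ) with hε
  set N : ℤ := (b : ℤ) * (e * p - d * s) + (e - d) * a with hN
  have hNne : N ≠ 0 := by
    intro h0
    have heq : e * ((b : ℤ) * p + a) = d * ((b : ℤ) * s + a) := by
      linear_combination h0
    have hco : IsCoprime d ((b : ℤ) * p + a) := Int.isCoprime_iff_gcd_eq_one.mpr hp
    have hdvd : d ∣ e := by
      have hd1 : d ∣ e * ((b : ℤ) * p + a) := ⟨(b : ℤ) * s + a, heq⟩
      exact hco.dvd_of_dvd_mul_right hd1
    have := Int.le_of_dvd (abs_pos.mpr he) ((abs_dvd_abs d e).mpr hdvd)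
    omega
  have hgdvd : (Int.gcd d e : ℤ) ∣ N := by
    have hg1 : (Int.gcd d e : ℤ) ∣ d := Int.gcd_dvd_left d e
    have hg2 : (Int.gcd d e : ℤ) ∣ e := Int.gcd_dvd_right d e
    rw [hN]
    exact dvd_add (((hg2.mul_right p).sub (hg1.mul_right s)).mul_left _)
      ((hg2.sub hg1).mul_right a)
  have hN3 : (3 : ℤ) ≤ |N| := by
    have hle := Int.le_of_dvd (abs_pos.mpr hNne) ((dvd_abs _ _).mpr hgdvd)
    have h3' : (3 : ℤ) ≤ (Int.gcd d e : ℤ) := by exact_mod_cast hgcd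
    omega
  -- real estimates
  have hedR : |(e : ℝ)| < |(d : ℝ)| := by
    have := hed
    rw [← Int.cast_abs, ← Int.cast_abs]
    exact_mod_cast this
  have habsd : (0 : ℝ) < |(d : ℝ)| := abs_pos.mpr hd0
  have hx2 : |((e : ℝ) - (d : ℝ)) * ε| < 2 := by
    have h1' : |(e : ℝ) - (d : ℝ)| ≤ 2 * |(d : ℝ)| := by
      have := abs_sub (e : ℝ) (d : ℝ)
      linarith [abs_sub_abs_le_abs_sub (e : ℝ) (d : ℝ), abs_sub (e : ℝ) (d : ℝ)]
    calc |((e : ℝ) - (d : ℝ)) * ε| = |(e : ℝ) - (d : ℝ)| * |ε| := abs_mul _ _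
      _ ≤ 2 * |(d : ℝ)| * |ε| := mul_le_mul_of_nonneg_right h1' (abs_nonneg _)
      _ < 2 * |(d : ℝ)| * (1 / |(d : ℝ)|) := by
          apply mul_lt_mul_of_pos_left h1 (by positivity)
      _ = 2 := by field_simp
  have hN3R : (3 : ℝ) ≤ |(N : ℝ)| := by
    rw [← Int.cast_abs]; exact_mod_cast hN3
  have hbig : 1 < |(N : ℝ) + ((e : ℝ) - (d : ℝ)) * ε| := by
    have htri : |(N : ℝ)| ≤ |(N : ℝ) + ((e : ℝ) - (d : ℝ)) * ε| + |((e : ℝ) - (d : ℝ)) * ε| := by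
      have := abs_add_le ((N : ℝ) + ((e : ℝ) - (d : ℝ)) * ε) (-(((e : ℝ) - (d : ℝ)) * ε))
      simpa using this
    linarith
  have key : (((p : ℝ) + y) / (d : ℝ) - ((s : ℝ) + y) / (e : ℝ)) * ((b : ℝ) * ((d : ℝ) * (e : ℝ)))
      = (N : ℝ) + ((e : ℝ) - (d : ℝ)) * ε := by
    rw [hN, hε]
    push_cast
    field_simp
    ring
  rw [div_lt_iff₀ (by positivity)]
  have heq2 : |((p : ℝ) + y) / (d : ℝ) - ((s : ℝ) + y) / (e : ℝ)| * ((b : ℝ) * |(d : ℝ) * (e : ℝ)|)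
      = |(N : ℝ) + ((e : ℝ) - (d : ℝ)) * ε| := by
    rw [← key]
    simp [abs_mul, abs_of_nonneg hb0.le]
  linarith [heq2, hbig]
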